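/- arXiv:1807.11693 — 6 statements merged into one kernel-verified Lean document; each statement's English description precedes it below -/
import Mathlib

section
/- Let P(x) = ∑_{n=0}^{N−1} a_n x^n be a degree N−1 polynomial with coefficients ±1 such that x^{N−1}P(1/x) = ±P(x), and let S_k denote the sum of the k-th powers of the roots of P. If a_0 = a_1 = ⋯ = a_{i−1} = 1 and a_i = −1 for some 2 ≤ i ≤ N−1, then S_0 = S_1 = ⋯ = S_{i−1} = −1 and S_i = 2i − 1. -/
open Polynomial

/-- Newton's identity for a multiset of complex numbers. -/
lemma multiset_newton (s : Multiset ℂ) (k : ℕ) (hk : 0 < k) :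
    (s.map (· ^ k)).sum = (-1) ^ (k + 1) * k * s.esymm k -
      ∑ a ∈ (Finset.HasAntidiagonal.antidiagonal k).filter (fun a => a.1 ∈ Set.Ioo 0 k),
        (-1) ^ a.1 * s.esymm a.1 * (s.map (· ^ a.2)).sum := by
  induction s using Quotient.inductionOn with
  | h l =>
    simp only [Multiset.quot_mk_to_coe'', Multiset.quot_mk_to_coe]
    have hrep : (↑l : Multiset ℂ) = Multiset.map l.get Finset.univ.val := by
      rw [Fin.univ_val_map]
      simp [List.ofFn_get]
    have key := congrArg (MvPolynomial.aeval (R := ℂ) l.get)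
      (MvPolynomial.psum_eq_mul_esymm_sub_sum (Fin l.length) ℂ k hk)
    have hpsum : ∀ m : ℕ, (MvPolynomial.aeval (R := ℂ) l.get) (MvPolynomial.psum (Fin l.length) ℂ m)
        = ((↑l : Multiset ℂ).map (· ^ m)).sum := by
      intro m
      rw [hrep, Multiset.map_map]
      simp [MvPolynomial.psum, Finset.sum_eq_multiset_sum, Function.comp, map_list_sum,
        List.map_ofFn, Function.comp_def, map_pow, MvPolynomial.aeval_X]
    have hesymm : ∀ m : ℕ, (MvPolynomial.aeval (R := ℂ) l.get)
        (MvPolynomial.esymm (Fin l.length) ℂ m) = (↑l : Multiset ℂ).esymm m := by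
      intro m
      rw [MvPolynomial.aeval_esymm_eq_multiset_esymm, ← hrep]
    rw [hpsum] at key
    rw [key]
    simp only [map_sub, map_mul, map_sum, map_pow, map_neg, map_one, map_natCast,
      hesymm, hpsum]

/-- Rewriting a sum over a filtered antidiagonal as a sum over `Ioo 0 k`. -/
lemma antidiag_filter_sum (k : ℕ) (g : ℕ → ℕ → ℂ) :
    ∑ a ∈ (Finset.HasAntidiagonal.antidiagonal k).filter (fun a => a.1 ∈ Set.Ioo 0 k), g a.1 a.2
      = ∑ j ∈ Finset.Ioo 0 k, g j (k - j) := by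
  rw [Finset.sum_filter, Finset.Nat.sum_antidiagonal_eq_sum_range_succ_mk]
  rw [← Finset.sum_filter]
  apply Finset.sum_congr
  · ext j; simp [Set.mem_Ioo]; omega
  · intros; rfl

theorem power_sums_of_littlewood_cyclotomic (N i : ℕ) (P : Polynomial ℤ) (hN : 2 ≤ N)
    (hdeg : P.natDegree = N - 1)
    (hcoeff : ∀ n ≤ N - 1, P.coeff n = 1 ∨ P.coeff n = -1)
    (hrecip : P.reverse = P ∨ P.reverse = -P)
    (hi1 : 2 ≤ i) (hi2 : i ≤ N - 1)
    (hones : ∀ n < i, P.coeff n = 1) (hneg : P.coeff i = -1)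
    (S : ℕ → ℂ)
    (hS : ∀ k, S k = (((P.map (Int.castRingHom ℂ)).roots).map (fun r => r ^ k)).sum) :
    (∀ k, 1 ≤ k → k ≤ i - 1 → S k = -1) ∧ S i = 2 * i - 1 := by
  set n := N - 1 with hn
  have hn1 : 1 ≤ n := by omega
  have h00 : P.coeff 0 = 1 := hones 0 (by omega)
  -- key symmetry of coefficients
  have hrev : ∀ j ≤ n, P.reverse.coeff j = P.coeff (n - j) := fun j hj => by
    rw [Polynomial.coeff_reverse, hdeg, Polynomial.revAt_le hj]
  have hkey : ∀ j ≤ n, P.coeff (n - j) = P.coeff n * P.coeff j := by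
    rcases hrecip with h | h
    · have e : ∀ j ≤ n, P.coeff (n - j) = P.coeff j := fun j hj => by
        rw [← hrev j hj, h]
      have h0 : P.coeff n = 1 := by
        have := e 0 (Nat.zero_le n); simpa [h00] using this
      intro j hj; rw [h0, one_mul, e j hj]
    · have e : ∀ j ≤ n, P.coeff (n - j) = -P.coeff j := fun j hj => by
        rw [← hrev j hj, h]; simp
      have h0 : P.coeff n = -1 := by
        have := e 0 (Nat.zero_le n); simpa [h00] using this
      intro j hj; rw [e j hj, h0]; ring
  have hlc2 : P.coeff n * P.coeff n = 1 := by
    rcases hcoeff n le_rfl with h | h <;> rw [h] <;> norm_num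
  -- the complex polynomial
  set Q : Polynomial ℂ := P.map (Int.castRingHom ℂ) with hQ
  have hQdeg : Q.natDegree = n := by
    rw [hQ, Polynomial.natDegree_map_eq_of_injective (Int.cast_injective (α := ℂ)), hdeg]
  have hsplit : Q.Splits := IsAlgClosed.splits Q
  set R : Multiset ℂ := Q.roots with hR
  have hQlc : Q.leadingCoeff = ((P.coeff n : ℤ) : ℂ) := by
    rw [Polynomial.leadingCoeff, hQdeg, hQ, Polynomial.coeff_map]; rfl
  have hQcoeff : ∀ m, Q.coeff m = ((P.coeff m : ℤ) : ℂ) := fun m => by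
    rw [hQ, Polynomial.coeff_map]; rfl
  have hlcC : ((P.coeff n : ℤ) : ℂ) ≠ 0 := by
    rcases hcoeff n le_rfl with h | h <;> rw [h] <;> norm_num
  -- elementary symmetric values
  have hE : ∀ j ≤ n, R.esymm j = (-1) ^ j * ((P.coeff j : ℤ) : ℂ) := by
    intro j hj
    have hv := Polynomial.coeff_eq_esymm_roots_of_splits hsplit
      (k := n - j) (by rw [hQdeg]; omega)
    rw [hQdeg] at hv
    have hnj : n - (n - j) = j := by omega
    rw [hnj, hQcoeff, hkey j hj, hQlc, ← hR] at hv
    push_cast at hv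
    have := mul_left_cancel₀ hlcC (by rw [hv]; ring :
      ((P.coeff n : ℤ) : ℂ) * (((P.coeff j : ℤ) : ℂ)) =
      ((P.coeff n : ℤ) : ℂ) * ((-1) ^ j * R.esymm j))
    rw [this]
    have : ((-1 : ℂ)) ^ j * ((-1 : ℂ)) ^ j = 1 := by
      rw [← pow_add, ← two_mul, pow_mul]; norm_num
    rw [← mul_assoc, this, one_mul]
  -- Newton's identity in convenient form
  have hNewt : ∀ k, 0 < k → k ≤ n → S k = -(k : ℂ) * ((P.coeff k : ℤ) : ℂ) -
      ∑ j ∈ Finset.Ioo 0 k, ((P.coeff j : ℤ) : ℂ) * S (k - j) := by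
    intro k hk hkn
    have hnewt := multiset_newton R k hk
    rw [← hS k] at hnewt
    rw [antidiag_filter_sum k (fun a b => (-1) ^ a * R.esymm a * (R.map (· ^ b)).sum)] at hnewt
    rw [hnewt, hE k hkn]
    have h1 : (-1 : ℂ) ^ (k + 1) * (k : ℂ) * ((-1) ^ k * ((P.coeff k : ℤ) : ℂ))
        = -(k : ℂ) * ((P.coeff k : ℤ) : ℂ) := by
      have : ((-1 : ℂ)) ^ (k + 1) * ((-1 : ℂ)) ^ k = -1 := by
        rw [← pow_add]
        have : k + 1 + k = 2 * k + 1 := by ring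
        rw [this, pow_succ, pow_mul]; norm_num
      calc (-1 : ℂ) ^ (k + 1) * (k : ℂ) * ((-1) ^ k * ((P.coeff k : ℤ) : ℂ))
          = ((-1 : ℂ) ^ (k + 1) * (-1) ^ k) * ((k : ℂ) * ((P.coeff k : ℤ) : ℂ)) := by ring
        _ = -(k : ℂ) * ((P.coeff k : ℤ) : ℂ) := by rw [this]; ring
    rw [h1]
    congr 1
    apply Finset.sum_congr rfl
    intro j hj
    rw [Finset.mem_Ioo] at hj
    rw [hE j (by omega), ← hS (k - j)]
    have : ((-1 : ℂ)) ^ j * ((-1 : ℂ)) ^ j = 1 := by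
      rw [← pow_add, ← two_mul, pow_mul]; norm_num
    calc (-1 : ℂ) ^ j * ((-1) ^ j * ((P.coeff j : ℤ) : ℂ)) * S (k - j)
        = ((-1 : ℂ) ^ j * (-1) ^ j) * (((P.coeff j : ℤ) : ℂ) * S (k - j)) := by ring
      _ = ((P.coeff j : ℤ) : ℂ) * S (k - j) := by rw [this]; ring
  -- Part 1
  have part1 : ∀ k, 1 ≤ k → k ≤ i - 1 → S k = -1 := by
    intro k
    induction k using Nat.strong_induction_on with
    | _ k ih =>
      intro h1 h2
      have hNk := hNewt k (by omega) (by omega)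
      rw [hones k (by omega)] at hNk
      have hsum : ∑ j ∈ Finset.Ioo 0 k, ((P.coeff j : ℤ) : ℂ) * S (k - j)
          = ∑ j ∈ Finset.Ioo 0 k, (-1 : ℂ) := by
        apply Finset.sum_congr rfl
        intro j hj
        rw [Finset.mem_Ioo] at hj
        rw [hones j (by omega), ih (k - j) (by omega) (by omega) (by omega)]
        norm_num
      rw [hsum, Finset.sum_const, Nat.card_Ioo, nsmul_eq_mul] at hNk
      simp only [Nat.sub_zero] at hNk
      rw [hNk, Nat.cast_sub h1]
      push_cast
      ring
  refine ⟨part1, ?_⟩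
  -- Part 2
  have hNi := hNewt i (by omega) (by omega)
  rw [hneg] at hNi
  have hsum : ∑ j ∈ Finset.Ioo 0 i, ((P.coeff j : ℤ) : ℂ) * S (i - j)
      = ∑ j ∈ Finset.Ioo 0 i, (-1 : ℂ) := by
    apply Finset.sum_congr rfl
    intro j hj
    rw [Finset.mem_Ioo] at hj
    rw [hones j (by omega), part1 (i - j) (by omega) (by omega)]
    norm_num
  rw [hsum, Finset.sum_const, Nat.card_Ioo, nsmul_eq_mul] at hNi
  simp only [Nat.sub_zero] at hNi
  rw [hNi, Nat.cast_sub (by omega : 1 ≤ i)]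
  push_cast
  ring
end

section
/- Let i ≥ 1, k = m·i + j with 1 ≤ j ≤ i − 1 and m ≥ 0. If v_2(k) ≥ v_2(i), then v_2((m+1)i + j) ≠ v_2(mi + j), where v_2 denotes the 2-adic valuation. -/
theorem v2_succ_block_ne (i j m k : ℕ) (hi : 1 ≤ i) (hj1 : 1 ≤ j) (hj2 : j ≤ i - 1)
    (hk : k = m * i + j) (h : padicValNat 2 i ≤ padicValNat 2 k) :
    padicValNat 2 ((m + 1) * i + j) ≠ padicValNat 2 (m * i + j) := by
  haveI : Fact (Nat.Prime 2) := ⟨Nat.prime_two⟩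
  subst hk
  have hk0 : m * i + j ≠ 0 := by omega
  have hi0 : i ≠ 0 := by omega
  have hs0 : (m + 1) * i + j ≠ 0 := by positivity
  have hsum : (m + 1) * i + j = (m * i + j) + i := by ring
  set a := padicValNat 2 i with ha
  set v := padicValNat 2 (m * i + j) with hv
  have hdk : 2 ^ v ∣ m * i + j := pow_padicValNat_dvd
  have hdi : 2 ^ a ∣ i := pow_padicValNat_dvd
  have hnk : ¬ 2 ^ (v + 1) ∣ m * i + j := pow_succ_padicValNat_not_dvd hk0
  have hni : ¬ 2 ^ (a + 1) ∣ i := pow_succ_padicValNat_not_dvd hi0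
  rcases lt_or_eq_of_le h with hlt | heq
  · -- a < v : v2(sum) = a
    have h1 : 2 ^ a ∣ (m * i + j) + i :=
      dvd_add (dvd_trans (pow_dvd_pow 2 h) hdk) hdi
    have h2 : ¬ 2 ^ (a + 1) ∣ (m * i + j) + i := by
      intro hd
      exact hni ((Nat.dvd_add_right (dvd_trans (pow_dvd_pow 2 hlt) hdk)).mp hd)
    have : padicValNat 2 ((m * i + j) + i) = a := by
      have hle : a ≤ padicValNat 2 ((m * i + j) + i) :=
        ((padicValNat_dvd_iff_le (by omega)).mp h1)
      have hge : padicValNat 2 ((m * i + j) + i) < a + 1 := by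
        by_contra hc
        exact h2 ((padicValNat_dvd_iff_le (by omega)).mpr (by omega))
      omega
    rw [hsum, this]; omega
  · -- a = v : v2(sum) ≥ v + 1
    have h1 : 2 ^ (v + 1) ∣ (m * i + j) + i := by
      obtain ⟨k', hk'⟩ := hdk
      obtain ⟨i', hi'⟩ := hdi
      have hko : ¬ 2 ∣ k' := by
        intro ⟨c, hc⟩; exact hnk ⟨c, by rw [hk', hc]; ring⟩
      have hio : ¬ 2 ∣ i' := by
        intro ⟨c, hc⟩; exact hni ⟨c, by rw [hi', hc]; ring⟩
      have : 2 ∣ k' + i' := by omega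
      obtain ⟨c, hc⟩ := this
      exact ⟨c, by rw [hk', hi', heq, ← Nat.mul_add, hc]; ring⟩
    have : v + 1 ≤ padicValNat 2 ((m * i + j) + i) :=
      (padicValNat_dvd_iff_le (by omega)).mp h1
    rw [hsum]; omega
end

section
/- Let t ≥ 0 and let w = (w_0, w_1, …, w_{t+1}) be a tuple of nonnegative integers satisfying w_0 + ∑_{n=1}^{t+1} 2^{n−1} w_n = 2^t. Define an E-move on w: for any 0 ≤ t' ≤ t, replace (w_0, …, w_{t'}, w_{t'+1}) by (w_0 ± 1, …, w_{t'} ± 1, w_{t'+1} ∓ 1) provided all resulting entries are nonnegative (keeping later entries fixed). Then there is a finite sequence of E-moves transforming w into (1, 1, …, 1, 0). -/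
open Finset

/-- An E-move on a tuple `w = (w_0, …, w_{t+1})`: choose `0 ≤ t' ≤ t` and either add `1` to each
of `w_0, …, w_{t'}` and subtract `1` from `w_{t'+1}`, or subtract `1` from each of
`w_0, …, w_{t'}` and add `1` to `w_{t'+1}`, provided all resulting entries are nonnegative. -/
def EMove (t : ℕ) (w w' : Fin (t + 2) → ℕ) : Prop :=
  ∃ t' : ℕ, ∃ _ : t' ≤ t,
    (((∀ n : Fin (t + 2), (n : ℕ) ≤ t' → w' n = w n + 1) ∧
        w' ⟨t' + 1, by omega⟩ + 1 = w ⟨t' + 1, by omega⟩) ∨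
      ((∀ n : Fin (t + 2), (n : ℕ) ≤ t' → w' n + 1 = w n) ∧
        w' ⟨t' + 1, by omega⟩ = w ⟨t' + 1, by omega⟩ + 1)) ∧
    (∀ n : Fin (t + 2), t' + 1 < (n : ℕ) → w' n = w n)


def Sval (t : ℕ) (w : Fin (t + 2) → ℕ) : ℕ :=
  ∑ n : Fin (t + 2), (if (n : ℕ) = 0 then 1 else 2 ^ ((n : ℕ) - 1)) * w n

def Mval (t : ℕ) (w : Fin (t + 2) → ℕ) : ℕ :=
  ∑ n : Fin (t + 2), (if (n : ℕ) = 0 then 0 else 2 ^ ((n : ℕ) - 1)) * w n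

lemma emove_symm (t : ℕ) : Symmetric (EMove t) := by
  rintro w w' ⟨t', ht, hor, htail⟩
  refine ⟨t', ht, ?_, fun n hn => (htail n hn).symm⟩
  rcases hor with ⟨h1, h2⟩ | ⟨h1, h2⟩
  · exact Or.inr ⟨fun n hn => (h1 n hn).symm, h2.symm⟩
  · exact Or.inl ⟨fun n hn => (h1 n hn).symm, h2.symm⟩

lemma gsumS (n : ℕ) : ∑ k ∈ Finset.range (n + 1), (if k = 0 then 1 else 2 ^ (k - 1) : ℤ) = 2 ^ n := by
  induction n with
  | zero => simp
  | succ n ih => rw [Finset.sum_range_succ, ih]; simp; ring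

lemma gsumM (n : ℕ) : ∑ k ∈ Finset.range (n + 1), (if k = 0 then 0 else 2 ^ (k - 1) : ℤ) = 2 ^ n - 1 := by
  induction n with
  | zero => simp
  | succ n ih => rw [Finset.sum_range_succ, ih]; simp; ring

lemma gsumSnat (n : ℕ) : ∑ k ∈ Finset.range (n + 1), (if k = 0 then 1 else 2 ^ (k - 1) : ℕ) = 2 ^ n := by
  induction n with
  | zero => simp
  | succ n ih => rw [Finset.sum_range_succ, ih]; simp; ring

lemma move_step (t t' : ℕ) (ht : t' ≤ t) (w : Fin (t + 2) → ℕ)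
    (hpos : 0 < w ⟨t' + 1, by omega⟩) :
    ∃ w₂, EMove t w w₂ ∧ Mval t w₂ + 1 = Mval t w ∧ Sval t w₂ = Sval t w := by
  set w₂ : Fin (t + 2) → ℕ := fun m =>
    if (m : ℕ) ≤ t' then w m + 1 else if (m : ℕ) = t' + 1 then w m - 1 else w m with hw₂
  have key : ∀ g : ℕ → ℤ, ∑ n : Fin (t + 2), g n * (w₂ n : ℤ) =
      (∑ n : Fin (t + 2), g n * (w n : ℤ)) + (∑ k ∈ Finset.range (t' + 1), g k) - g (t' + 1) := by
    intro g
    have hterm : ∀ n : Fin (t + 2), g n * (w₂ n : ℤ) = g n * (w n : ℤ) +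
        (if (n : ℕ) ≤ t' then g n else if (n : ℕ) = t' + 1 then -g n else 0) := by
      intro n
      by_cases h1 : (n : ℕ) ≤ t'
      · simp only [hw₂, h1, if_pos]; push_cast; ring
      · by_cases h2 : (n : ℕ) = t' + 1
        · have hwn : w n = w ⟨t' + 1, by omega⟩ := by
            congr 1; exact Fin.ext h2
          have hge : (1 : ℕ) ≤ w n := by rw [hwn]; exact hpos
          have h3 : ¬ (t' + 1 ≤ t') := by omega
          simp only [hw₂, h1, h2, if_neg, if_pos, if_false, if_true]
          rw [if_neg h3, if_neg h3]
          push_cast [Nat.cast_sub hge]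
          ring
        · simp [hw₂, h1, h2]
    rw [Finset.sum_congr rfl (fun n _ => hterm n), Finset.sum_add_distrib]
    have hconv := Fin.sum_univ_eq_sum_range
      (fun k => if k ≤ t' then g k else if k = t' + 1 then -g k else 0) (t + 2)
    rw [hconv, ← Finset.sum_range_add_sum_Ico _ (show t' + 1 ≤ t + 2 by omega)]
    have h1 : ∑ k ∈ Finset.range (t' + 1),
        (if k ≤ t' then g k else if k = t' + 1 then -g k else 0) =
        ∑ k ∈ Finset.range (t' + 1), g k := by
      apply Finset.sum_congr rfl
      intro k hk
      rw [Finset.mem_range] at hk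
      simp [Nat.lt_succ_iff.mp hk]
    have h2 : ∑ k ∈ Finset.Ico (t' + 1) (t + 2),
        (if k ≤ t' then g k else if k = t' + 1 then -g k else 0) = -g (t' + 1) := by
      have := Finset.sum_eq_single_of_mem (t' + 1)
        (by rw [Finset.mem_Ico]; omega : t' + 1 ∈ Finset.Ico (t' + 1) (t + 2))
        (f := fun k => if k ≤ t' then g k else if k = t' + 1 then -g k else 0)
        (fun k hk hne => by
          rw [Finset.mem_Ico] at hk
          have : ¬ k ≤ t' := by omega
          simp [this, hne])
      simpa using this
    rw [h1, h2]; ring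
  -- weights cast
  have castS : ∀ v : Fin (t + 2) → ℕ, (Sval t v : ℤ) =
      ∑ n : Fin (t + 2), (if (n : ℕ) = 0 then 1 else 2 ^ ((n : ℕ) - 1) : ℤ) * (v n : ℤ) := by
    intro v
    rw [Sval]; push_cast
    apply Finset.sum_congr rfl
    intro n _
    split_ifs <;> push_cast <;> ring
  have castM : ∀ v : Fin (t + 2) → ℕ, (Mval t v : ℤ) =
      ∑ n : Fin (t + 2), (if (n : ℕ) = 0 then 0 else 2 ^ ((n : ℕ) - 1) : ℤ) * (v n : ℤ) := by
    intro v
    rw [Mval]; push_cast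
    apply Finset.sum_congr rfl
    intro n _
    split_ifs <;> push_cast <;> ring
  have hS : Sval t w₂ = Sval t w := by
    have := key (fun k => if k = 0 then 1 else 2 ^ (k - 1))
    rw [gsumS] at this
    have hz : (Sval t w₂ : ℤ) = (Sval t w : ℤ) := by
      rw [castS, castS, this]; simp
    exact_mod_cast hz
  have hM : Mval t w₂ + 1 = Mval t w := by
    have := key (fun k => if k = 0 then 0 else 2 ^ (k - 1))
    rw [gsumM] at this
    have hz : (Mval t w₂ : ℤ) + 1 = (Mval t w : ℤ) := by
      rw [castM, castM, this]; simp; ring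
    exact_mod_cast hz
  refine ⟨w₂, ⟨t', ht, Or.inl ⟨?_, ?_⟩, ?_⟩, hM, hS⟩
  · intro n hn; simp [hw₂, hn]
  · have h1 : ¬ (t' + 1 ≤ t') := by omega
    simp only [hw₂, h1, if_false, if_true, if_neg, if_pos]
    omega
  · intro n hn
    have h1 : ¬ ((n : ℕ) ≤ t') := by omega
    have h2 : (n : ℕ) ≠ t' + 1 := by omega
    simp [hw₂, h1, h2]

lemma reach0 (t : ℕ) : ∀ N (w : Fin (t + 2) → ℕ), Mval t w = N →
    ∃ w', Relation.ReflTransGen (EMove t) w w' ∧ Mval t w' = 0 ∧ Sval t w' = Sval t w := by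
  intro N
  induction N using Nat.strong_induction_on with
  | _ N ih =>
    intro w hN
    by_cases h0 : Mval t w = 0
    · exact ⟨w, Relation.ReflTransGen.refl, h0, rfl⟩
    · have hex : ∃ n : Fin (t + 2), (n : ℕ) ≠ 0 ∧ 0 < w n := by
        by_contra hc
        push_neg at hc
        apply h0
        apply Finset.sum_eq_zero
        intro n _
        by_cases hn : (n : ℕ) = 0
        · simp [hn]
        · have := hc n hn
          have : w n = 0 := by omega
          simp [this]
      obtain ⟨n, hn0, hnpos⟩ := hex
      have hle : (n : ℕ) - 1 ≤ t := by have := n.isLt; omega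
      have hidx : (⟨(n : ℕ) - 1 + 1, by omega⟩ : Fin (t + 2)) = n := Fin.ext (show (n : ℕ) - 1 + 1 = (n : ℕ) by omega)
      obtain ⟨w₂, hmove, hM, hS⟩ := move_step t ((n : ℕ) - 1) hle w (by rw [hidx]; exact hnpos)
      obtain ⟨w', hrt, hM0, hS'⟩ := ih (Mval t w₂) (by omega) w₂ rfl
      exact ⟨w', Relation.ReflTransGen.head hmove hrt, hM0, hS'.trans hS⟩

lemma sval_decomp (t : ℕ) (w : Fin (t + 2) → ℕ) : Sval t w = w 0 + Mval t w := by
  have hterm : ∀ n : Fin (t + 2), (if (n : ℕ) = 0 then 1 else 2 ^ ((n : ℕ) - 1)) * w n =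
      (if (n : ℕ) = 0 then w n else 0) +
      (if (n : ℕ) = 0 then 0 else 2 ^ ((n : ℕ) - 1)) * w n := by
    intro n; split_ifs <;> ring
  rw [Sval, Mval, Finset.sum_congr rfl (fun n _ => hterm n), Finset.sum_add_distrib]
  congr 1
  have := Finset.sum_eq_single_of_mem (0 : Fin (t + 2)) (Finset.mem_univ _)
    (f := fun n : Fin (t + 2) => if (n : ℕ) = 0 then w n else 0)
    (fun n _ hne => by
      have : (n : ℕ) ≠ 0 := fun h => hne (Fin.ext h)
      simp [this])
  simpa using this

lemma reach_canonical (t : ℕ) (w : Fin (t + 2) → ℕ) (hsum : Sval t w = 2 ^ t) :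
    Relation.ReflTransGen (EMove t) w (fun n => if (n : ℕ) = 0 then 2 ^ t else 0) := by
  obtain ⟨w', hrt, hM0, hS⟩ := reach0 t (Mval t w) w rfl
  have hS' : Sval t w' = 2 ^ t := hS.trans hsum
  have hzero : ∀ n : Fin (t + 2), (n : ℕ) ≠ 0 → w' n = 0 := by
    intro n hn
    have := (Finset.sum_eq_zero_iff.mp hM0) n (Finset.mem_univ n)
    simp only [hn, if_neg] at this
    rcases Nat.mul_eq_zero.mp this with h | h
    · exact absurd h (pow_ne_zero _ (by norm_num))
    · exact h
  have hw0 : w' 0 = 2 ^ t := by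
    have := sval_decomp t w'
    rw [hS', hM0] at this
    omega
  have : w' = fun n : Fin (t + 2) => if (n : ℕ) = 0 then 2 ^ t else 0 := by
    funext n
    by_cases hn : (n : ℕ) = 0
    · have : n = 0 := Fin.ext hn
      rw [this, hw0]; simp
    · rw [hzero n hn]; simp [hn]
  rwa [this] at hrt

theorem emove_reaches_ones (t : ℕ) (w : Fin (t + 2) → ℕ)
    (hsum : ∑ n : Fin (t + 2), (if (n : ℕ) = 0 then 1 else 2 ^ ((n : ℕ) - 1)) * w n = 2 ^ t) :
    Relation.ReflTransGen (EMove t) w (fun n => if (n : ℕ) = t + 1 then 0 else 1) := by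
  have h1 : Relation.ReflTransGen (EMove t) w (fun n => if (n : ℕ) = 0 then 2 ^ t else 0) :=
    reach_canonical t w hsum
  have hsum2 : Sval t (fun n : Fin (t + 2) => if (n : ℕ) = t + 1 then 0 else 1) = 2 ^ t := by
    rw [Sval]
    have hconv := Fin.sum_univ_eq_sum_range
      (fun k => (if k = 0 then 1 else 2 ^ (k - 1)) * (if k = t + 1 then 0 else 1)) (t + 2)
    rw [show (∑ n : Fin (t + 2), (if (n : ℕ) = 0 then 1 else 2 ^ ((n : ℕ) - 1)) *
        (if (n : ℕ) = t + 1 then 0 else 1)) = _ from hconv]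
    rw [Finset.sum_range_succ]
    have hlast : (if t + 1 = 0 then 1 else 2 ^ (t + 1 - 1)) * (if t + 1 = t + 1 then 0 else 1) = 0 := by
      simp
    rw [hlast, add_zero, ← gsumSnat t]
    apply Finset.sum_congr rfl
    intro k hk
    rw [Finset.mem_range] at hk
    have : k ≠ t + 1 := by omega
    simp [this]
  have h2 : Relation.ReflTransGen (EMove t)
      (fun n : Fin (t + 2) => if (n : ℕ) = t + 1 then 0 else 1)
      (fun n => if (n : ℕ) = 0 then 2 ^ t else 0) :=
    reach_canonical t _ hsum2
  exact h1.trans ((@Relation.ReflTransGen.symmetric _ _ ⟨fun a b h => emove_symm t h⟩).symm _ _ h2)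
end

section
/- Let t ≥ 0 and let w = (w_0, w_1, …, w_{t+1}) be a tuple of nonnegative integers satisfying w_0 + ∑_{n=1}^{t+1} 2^{n−1} w_n = 2^t − 1. With E-moves defined as adding ±1 to each of w_0,…,w_{t'} and ∓1 to w_{t'+1} (for some 0 ≤ t' ≤ t, provided all entries remain nonnegative), there is a finite sequence of E-moves transforming w into (0, 1, 1, …, 1, 0). -/
open Finset

/-- Splitting a sum at two distinct points, for two functions agreeing elsewhere. -/
lemma sum_split_two {m : ℕ} (F G : Fin m → ℕ) (i j : Fin m) (hij : i ≠ j)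
    (h : ∀ n, n ≠ i → n ≠ j → F n = G n) :
    (∑ n, F n) + G i + G j = (∑ n, G n) + F i + F j := by
  have key : ∀ H : Fin m → ℕ,
      ∑ n, H n = (∑ n ∈ (univ.erase i).erase j, H n) + H j + H i := by
    intro H
    rw [Finset.sum_erase_add _ _ (Finset.mem_erase.mpr ⟨Ne.symm hij, mem_univ j⟩),
      Finset.sum_erase_add _ _ (mem_univ i)]
  rw [key F, key G]
  have : ∑ n ∈ (univ.erase i).erase j, F n = ∑ n ∈ (univ.erase i).erase j, G n := by
    refine Finset.sum_congr rfl fun n hn => ?_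
    simp only [Finset.mem_erase] at hn
    exact h n hn.2.1 hn.1
  omega

lemma geo_two : ∀ n : ℕ, (∑ i ∈ range n, 2 ^ i) + 1 = 2 ^ n := by
  intro n
  induction n with
  | zero => simp
  | succ n ih => rw [Finset.sum_range_succ, pow_succ]; omega

lemma target_sum (t : ℕ) :
    ∑ n : Fin (t + 2), (if (n : ℕ) = 0 then 1 else 2 ^ ((n : ℕ) - 1)) *
      (if (n : ℕ) = 0 ∨ (n : ℕ) = t + 1 then 0 else 1) = 2 ^ t - 1 := by
  rw [Fin.sum_univ_eq_sum_range
    (fun n => (if n = 0 then 1 else 2 ^ (n - 1)) * (if n = 0 ∨ n = t + 1 then 0 else 1)) (t + 2)]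
  rw [Finset.sum_range_succ, Finset.sum_range_succ']
  have h1 : ∀ i ∈ range t,
      (if i + 1 = 0 then 1 else 2 ^ (i + 1 - 1)) * (if i + 1 = 0 ∨ i + 1 = t + 1 then 0 else 1)
        = 2 ^ i := by
    intro i hi
    rw [Finset.mem_range] at hi
    rw [if_neg (by omega), if_neg (by omega)]
    simp
  rw [Finset.sum_congr rfl h1]
  simp
  rw [← geo_two t]
  simp

lemma normal_eq {t : ℕ} (w : Fin (t + 2) → ℕ)
    (hsum : ∑ n : Fin (t + 2), (if (n : ℕ) = 0 then 1 else 2 ^ ((n : ℕ) - 1)) * w n = 2 ^ t - 1)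
    (h0 : w ⟨0, by omega⟩ = 0) (h1 : ∀ n, w n ≤ 1) :
    w = fun n : Fin (t + 2) => if (n : ℕ) = 0 ∨ (n : ℕ) = t + 1 then 0 else 1 := by
  have htop : w ⟨t + 1, by omega⟩ = 0 := by
    by_contra h
    have hge : 1 ≤ w ⟨t + 1, by omega⟩ := by omega
    have := Finset.single_le_sum
      (f := fun n : Fin (t + 2) => (if (n : ℕ) = 0 then 1 else 2 ^ ((n : ℕ) - 1)) * w n)
      (fun i _ => Nat.zero_le _) (mem_univ ⟨t + 1, by omega⟩)
    rw [hsum] at this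
    simp only [if_neg (by omega : ¬ (t + 1 = 0))] at this
    have h2 : 2 ^ (t + 1 - 1) * 1 ≤ 2 ^ (t + 1 - 1) * w ⟨t + 1, by omega⟩ :=
      Nat.mul_le_mul_left _ hge
    have hpos : 0 < 2 ^ t := Nat.pow_pos (by norm_num)
    simp only [show t + 1 - 1 = t from rfl] at this h2
    omega
  funext n
  by_cases hn0 : (n : ℕ) = 0
  · have : n = ⟨0, by omega⟩ := Fin.ext hn0
    rw [if_pos (Or.inl hn0), this, h0]
  · by_cases hnt : (n : ℕ) = t + 1
    · have : n = ⟨t + 1, by omega⟩ := Fin.ext hnt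
      rw [if_pos (Or.inr hnt), this, htop]
    · rw [if_neg (by tauto)]
      by_contra hne
      have hw0 : w n = 0 := by have := h1 n; omega
      have hlt : ∑ m : Fin (t + 2), (if (m : ℕ) = 0 then 1 else 2 ^ ((m : ℕ) - 1)) * w m
          < ∑ m : Fin (t + 2), (if (m : ℕ) = 0 then 1 else 2 ^ ((m : ℕ) - 1)) *
            (if (m : ℕ) = 0 ∨ (m : ℕ) = t + 1 then 0 else 1) := by
        refine Finset.sum_lt_sum (fun m _ => ?_) ⟨n, mem_univ n, ?_⟩
        · by_cases hm0 : (m : ℕ) = 0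
          · have : m = ⟨0, by omega⟩ := Fin.ext hm0
            rw [this, h0]; simp
          · by_cases hmt : (m : ℕ) = t + 1
            · have : m = ⟨t + 1, by omega⟩ := Fin.ext hmt
              rw [this, htop]; simp
            · rw [if_neg (show ¬((m : ℕ) = 0 ∨ (m : ℕ) = t + 1) by tauto)]
              exact Nat.mul_le_mul_left _ (h1 m)
        · rw [hw0, if_neg (show ¬((n : ℕ) = 0 ∨ (n : ℕ) = t + 1) by tauto), if_neg hn0,
            mul_zero, mul_one]
          exact Nat.pow_pos (by norm_num)
      rw [hsum, target_sum] at hlt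
      omega

lemma key_induction (t : ℕ) : ∀ (N : ℕ) (w : Fin (t + 2) → ℕ),
    2 * (∑ n, w n) + w ⟨0, by omega⟩ ≤ N →
    (∑ n : Fin (t + 2), (if (n : ℕ) = 0 then 1 else 2 ^ ((n : ℕ) - 1)) * w n = 2 ^ t - 1) →
    Relation.ReflTransGen (EMove t) w
      (fun n : Fin (t + 2) => if (n : ℕ) = 0 ∨ (n : ℕ) = t + 1 then 0 else 1) := by
  intro N
  induction N with
  | zero =>
    intro w hN hs
    have hz : ∀ n, w n = 0 := by
      intro n
      have hzz : ∑ n, w n = 0 := by omega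
      exact Finset.sum_eq_zero_iff.mp hzz n (mem_univ n)
    rw [normal_eq w hs (hz _) (fun n => by rw [hz n]; omega)]
  | succ N ih =>
    intro w hN hs
    by_cases h0 : w ⟨0, by omega⟩ = 0
    · by_cases h2 : ∃ n : Fin (t + 2), 2 ≤ w n
      · obtain ⟨m, hm⟩ := h2
        obtain ⟨k, hk⟩ : ∃ k : ℕ, (m : ℕ) = k := ⟨(m : ℕ), rfl⟩
        have hm0 : (m : ℕ) ≠ 0 := by
          intro h
          have hme : m = ⟨0, by omega⟩ := Fin.ext h
          rw [hme] at hm; omega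
        have hk1 : 1 ≤ k := by omega
        -- k < t
        have hkt : k < t := by
          have hle := Finset.single_le_sum
            (f := fun n : Fin (t + 2) => (if (n : ℕ) = 0 then 1 else 2 ^ ((n : ℕ) - 1)) * w n)
            (fun i _ => Nat.zero_le _) (mem_univ m)
          rw [hs] at hle
          have hle' : (if (m : ℕ) = 0 then 1 else 2 ^ ((m : ℕ) - 1)) * w m ≤ 2 ^ t - 1 := hle
          rw [if_neg hm0, hk] at hle'
          have h2' : 2 ^ (k - 1) * 2 ≤ 2 ^ (k - 1) * w m := Nat.mul_le_mul_left _ hm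
          have hpk : (2:ℕ) ^ (k - 1) * 2 = 2 ^ k := by rw [← pow_succ]; congr 1; omega
          have hp : (0:ℕ) < 2 ^ t := Nat.pow_pos (by norm_num)
          have hklt : (2:ℕ) ^ k < 2 ^ t := by omega
          exact (Nat.pow_lt_pow_iff_right (by norm_num)).mp hklt
        -- configurations
        set u : Fin (t + 2) → ℕ := fun n =>
          if (n : ℕ) < k then w n + 1 else if (n : ℕ) = k then w n - 1 else w n with hu
        set w' : Fin (t + 2) → ℕ := fun n =>
          if (n : ℕ) = k then w n - 2 else if (n : ℕ) = k + 1 then w n + 1 else w n with hw'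
        have hwm : ∀ n : Fin (t + 2), (n : ℕ) = k → w n = w m := by
          intro n hn
          rw [show n = m from Fin.ext (hn.trans hk.symm)]
        have humid : ∀ n : Fin (t + 2), (n : ℕ) = k → u n = w n - 1 := by
          intro n hn; simp [hu, hn]
        have hw'k : ∀ n : Fin (t + 2), (n : ℕ) = k → w' n = w n - 2 := by
          intro n hn; simp [hw', hn]
        have hw'k1 : ∀ n : Fin (t + 2), (n : ℕ) = k + 1 → w' n = w n + 1 := by
          intro n hn; simp [hw', hn]
        have move1 : EMove t w u := by
          refine ⟨k - 1, by omega, Or.inl ⟨?_, ?_⟩, ?_⟩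
          · intro n hn
            simp [hu, show (n : ℕ) < k by omega]
          · have key : ∀ n : Fin (t + 2), (n : ℕ) = k → u n + 1 = w n := by
              intro n hn
              rw [humid n hn, hwm n hn]
              omega
            exact key _ (show k - 1 + 1 = k by omega)
          · intro n hn
            simp [hu, show ¬ ((n : ℕ) < k) by omega, show ¬ ((n : ℕ) = k) by omega]
        have move2 : EMove t u w' := by
          refine ⟨k, by omega, Or.inr ⟨?_, ?_⟩, ?_⟩
          · intro n hn
            by_cases hnk : (n : ℕ) = k
            · rw [hw'k n hnk, humid n hnk, hwm n hnk]
              omega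
            · have hlt : (n : ℕ) < k := by omega
              simp [hw', hu, hnk, show ¬ ((n : ℕ) = k + 1) by omega, hlt]
          · have key : ∀ n : Fin (t + 2), (n : ℕ) = k + 1 → w' n = u n + 1 := by
              intro n hn
              rw [hw'k1 n hn]
              simp [hu, show ¬ ((n : ℕ) < k) by omega, show ¬ ((n : ℕ) = k) by omega]
            exact key _ rfl
          · intro n hn
            simp [hw', hu, show ¬ ((n : ℕ) = k) by omega, show ¬ ((n : ℕ) = k + 1) by omega,
              show ¬ ((n : ℕ) < k) by omega]
        -- bookkeeping
        set j : Fin (t + 2) := ⟨k + 1, by omega⟩ with hj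
        have hjval : (j : ℕ) = k + 1 := rfl
        have hij : m ≠ j := by
          intro h
          have h2' : (m : ℕ) = (j : ℕ) := congrArg Fin.val h
          rw [hjval] at h2'
          omega
        have hoff : ∀ n : Fin (t + 2), n ≠ m → n ≠ j → w' n = w n := by
          intro n hnm hnj
          have e1 : (n : ℕ) ≠ k := fun h => hnm (Fin.ext (h.trans hk.symm))
          have e2 : (n : ℕ) ≠ k + 1 := fun h => hnj (Fin.ext (h.trans hjval.symm))
          simp only [hw', if_neg e1, if_neg e2]
        have hvm : w' m = w m - 2 := hw'k m hk
        have hvj : w' j = w j + 1 := hw'k1 j hjval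
        have hcount := sum_split_two w' w m j hij hoff
        have hws := sum_split_two
          (fun n : Fin (t + 2) => (if (n : ℕ) = 0 then 1 else 2 ^ ((n : ℕ) - 1)) * w' n)
          (fun n : Fin (t + 2) => (if (n : ℕ) = 0 then 1 else 2 ^ ((n : ℕ) - 1)) * w n)
          m j hij (fun n h1 h2 => by simp only [hoff n h1 h2])
        have hws' : (∑ n : Fin (t + 2), (if (n : ℕ) = 0 then 1 else 2 ^ ((n : ℕ) - 1)) * w' n)
              + (if (m : ℕ) = 0 then 1 else 2 ^ ((m : ℕ) - 1)) * w m
              + (if (j : ℕ) = 0 then 1 else 2 ^ ((j : ℕ) - 1)) * w j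
            = (∑ n : Fin (t + 2), (if (n : ℕ) = 0 then 1 else 2 ^ ((n : ℕ) - 1)) * w n)
              + (if (m : ℕ) = 0 then 1 else 2 ^ ((m : ℕ) - 1)) * w' m
              + (if (j : ℕ) = 0 then 1 else 2 ^ ((j : ℕ) - 1)) * w' j := hws
        rw [hk, hjval] at hws'
        rw [if_neg (show ¬ (k = 0) by omega), if_neg (show ¬ (k + 1 = 0) by omega)] at hws'
        rw [show k + 1 - 1 = k from rfl] at hws'
        rw [hvm, hvj, hs] at hws'
        have hsplit2 : (2:ℕ) ^ (k - 1) * w m = 2 ^ (k - 1) * (w m - 2) + 2 ^ (k - 1) * 2 := by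
          rw [← Nat.mul_add]
          congr 1
          omega
        have hpk : (2:ℕ) ^ (k - 1) * 2 = 2 ^ k := by rw [← pow_succ]; congr 1; omega
        have hmul : (2:ℕ) ^ k * (w j + 1) = 2 ^ k * w j + 2 ^ k := by ring
        rw [hsplit2, hmul] at hws'
        have hs' : ∑ n : Fin (t + 2),
            (if (n : ℕ) = 0 then 1 else 2 ^ ((n : ℕ) - 1)) * w' n = 2 ^ t - 1 := by
          omega
        have hw0' : ∀ h : 0 < t + 2, w' ⟨0, h⟩ = w ⟨0, h⟩ := by
          intro h
          simp only [hw', if_neg (show ¬ ((0:ℕ) = k) by omega),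
            if_neg (show ¬ ((0:ℕ) = k + 1) by omega)]
        refine Relation.ReflTransGen.head move1
          (Relation.ReflTransGen.head move2 (ih w' ?_ hs'))
        rw [hw0']
        rw [hvm, hvj] at hcount
        omega
      · push_neg at h2
        rw [normal_eq w hs h0 (fun n => by have := h2 n; omega)]
    · -- move a unit from position 0 to position 1
      set i : Fin (t + 2) := ⟨0, by omega⟩ with hi
      set j : Fin (t + 2) := ⟨1, by omega⟩ with hj
      have hival : (i : ℕ) = 0 := rfl
      have hjval : (j : ℕ) = 1 := rfl
      set w' : Fin (t + 2) → ℕ := fun n =>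
        if (n : ℕ) = 0 then w n - 1 else if (n : ℕ) = 1 then w n + 1 else w n with hw'
      have hvi : w' i = w i - 1 := by simp only [hw', hival, ↓reduceIte]
      have hvj : w' j = w j + 1 := by simp only [hw', hjval, one_ne_zero, ↓reduceIte]
      have hij : i ≠ j := by
        intro h
        have h2 : (i : ℕ) = (j : ℕ) := congrArg Fin.val h
        rw [hival, hjval] at h2
        omega
      have hoff : ∀ n : Fin (t + 2), n ≠ i → n ≠ j → w' n = w n := by
        intro n hni hnj
        have e1 : (n : ℕ) ≠ 0 := fun h => hni (Fin.ext (h.trans hival.symm))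
        have e2 : (n : ℕ) ≠ 1 := fun h => hnj (Fin.ext (h.trans hjval.symm))
        simp only [hw', if_neg e1, if_neg e2]
      have move1 : EMove t w w' := by
        refine ⟨0, Nat.zero_le t, Or.inr ⟨?_, ?_⟩, ?_⟩
        · intro n hn
          have hne : n = i := Fin.ext (show (n:ℕ) = (i:ℕ) by rw [hival]; omega)
          rw [hne, hvi]
          have : 1 ≤ w i := by omega
          omega
        · have key : ∀ n : Fin (t + 2), (n : ℕ) = 1 → w' n = w n + 1 := by
            intro n hn
            have hne : n = j := Fin.ext (hn.trans hjval.symm)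
            rw [hne, hvj]
          exact key _ rfl
        · intro n hn
          refine hoff n (fun h => ?_) (fun h => ?_)
          · rw [h, hival] at hn; omega
          · rw [h, hjval] at hn; omega
      have hcount := sum_split_two w' w i j hij hoff
      have hws := sum_split_two
        (fun n : Fin (t + 2) => (if (n : ℕ) = 0 then 1 else 2 ^ ((n : ℕ) - 1)) * w' n)
        (fun n : Fin (t + 2) => (if (n : ℕ) = 0 then 1 else 2 ^ ((n : ℕ) - 1)) * w n)
        i j hij (fun n h1 h2 => by simp only [hoff n h1 h2])
      have hws' : (∑ n : Fin (t + 2), (if (n : ℕ) = 0 then 1 else 2 ^ ((n : ℕ) - 1)) * w' n)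
            + 1 * w i + 1 * w j
          = (∑ n : Fin (t + 2), (if (n : ℕ) = 0 then 1 else 2 ^ ((n : ℕ) - 1)) * w n)
            + 1 * w' i + 1 * w' j := hws
      rw [hvi, hvj, hs] at hws'
      have hs' : ∑ n : Fin (t + 2),
          (if (n : ℕ) = 0 then 1 else 2 ^ ((n : ℕ) - 1)) * w' n = 2 ^ t - 1 := by
        omega
      refine Relation.ReflTransGen.head move1 (ih w' ?_ hs')
      rw [hvi]
      rw [hvi, hvj] at hcount
      have : 1 ≤ w i := by omega
      omega

theorem emove_reaches_target (t : ℕ) (w : Fin (t + 2) → ℕ)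
    (hsum : ∑ n : Fin (t + 2), (if (n : ℕ) = 0 then 1 else 2 ^ ((n : ℕ) - 1)) * w n = 2 ^ t - 1) :
    Relation.ReflTransGen (EMove t) w
      (fun n => if (n : ℕ) = 0 ∨ (n : ℕ) = t + 1 then 0 else 1) := by
  exact key_induction t (2 * (∑ n, w n) + w ⟨0, by omega⟩) w le_rfl hsum
end

section
/- Suppose P(x) ∈ ℤ[x] has degree N − 1, all coefficients odd, and all roots being roots of unity (i.e., P is cyclotomic). Writing P(x) = c·∏_{d≥1} Φ_d(x)^{e(d)} where Φ_d is the d-th irreducible cyclotomic polynomial, then e(d) = 0 unless d divides 2N. -/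
open Polynomial Finset

private lemma rootMult_pow {K : Type*} [CommRing K] [IsDomain K] {p : K[X]} (hp : p ≠ 0)
    (x : K) (n : ℕ) : (p ^ n).rootMultiplicity x = n * p.rootMultiplicity x := by
  induction n with
  | zero => simp [Polynomial.rootMultiplicity_eq_zero (show ¬ (1 : K[X]).IsRoot x by
      simp [Polynomial.IsRoot])]
  | succ n ih =>
    rw [pow_succ, Polynomial.rootMultiplicity_mul (mul_ne_zero (pow_ne_zero n hp) hp), ih]
    ring

theorem cyclotomic_factors_divide (N D : ℕ) (hN : 2 ≤ N) (P : Polynomial ℤ) (c : ℤ)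
    (e : ℕ → ℕ) (hc : c = 1 ∨ c = -1)
    (hdeg : P.natDegree = N - 1)
    (hodd : ∀ n ≤ N - 1, Odd (P.coeff n))
    (hfac : P = C c * ∏ d ∈ Finset.Icc 1 D, (cyclotomic d ℤ) ^ e d) :
    ∀ d ∈ Finset.Icc 1 D, e d ≠ 0 → d ∣ 2 * N := by
  intro d hd hed
  obtain ⟨hd1, hdD⟩ := Finset.mem_Icc.mp hd
  have hd0 : d ≠ 0 := by omega
  have hN0 : N ≠ 0 := by omega
  set K := AlgebraicClosure (ZMod 2) with hK
  haveI : Fact (Nat.Prime 2) := ⟨Nat.prime_two⟩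
  have h2K : (2 : K) = 0 := CharP.cast_eq_zero K 2
  set k := d.factorization 2 with hk
  set m := ordCompl[2] d with hm
  have hdm : 2 ^ k * m = d := Nat.ordProj_mul_ordCompl_eq_self d 2
  have hm2 : ¬ 2 ∣ m := Nat.not_dvd_ordCompl Nat.prime_two hd0
  have hm0 : m ≠ 0 := fun h => hd0 (by rw [← hdm, h, mul_zero])
  set a := N.factorization 2 with ha
  set N₀ := ordCompl[2] N with hN₀
  have hNm : 2 ^ a * N₀ = N := Nat.ordProj_mul_ordCompl_eq_self N 2
  have hN₀2 : ¬ 2 ∣ N₀ := Nat.not_dvd_ordCompl Nat.prime_two hN0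
  -- the reduction of P mod 2 (inside K)
  set f : ℤ →+* K := Int.castRingHom K with hf
  set Q : K[X] := P.map f with hQ
  have hQcoeff : ∀ n, Q.coeff n = if n < N then 1 else 0 := by
    intro n
    rw [hQ, coeff_map]
    split_ifs with h
    · obtain ⟨t, ht⟩ := hodd n (by omega)
      rw [ht]
      simp only [hf, Int.coe_castRingHom]
      push_cast
      rw [h2K]
      ring
    · rw [coeff_eq_zero_of_natDegree_lt (by omega), map_zero]
  have hQgeom : Q = ∑ i ∈ range N, (X : K[X]) ^ i := by
    ext n
    rw [hQcoeff]
    simp [coeff_X_pow, Finset.sum_ite_eq, eq_comm]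
  have hXN : Q * (X - 1) = (X : K[X]) ^ N - 1 := by rw [hQgeom, geom_sum_mul]
  -- cyclotomic d divides Q, hence X^N - 1
  have hcycP : cyclotomic d ℤ ∣ P := by
    rw [hfac]
    exact Dvd.dvd.mul_left
      (dvd_trans (dvd_pow_self _ hed) (Finset.dvd_prod_of_mem _ hd)) _
  have hcyc_dvd_Q : cyclotomic d K ∣ Q := by
    have := Polynomial.map_dvd f hcycP
    rwa [map_cyclotomic] at this
  have hdvdXN : cyclotomic d K ∣ (X : K[X]) ^ N - 1 := hXN ▸ hcyc_dvd_Q.mul_right _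
  -- a primitive m-th root of unity ζ in K
  haveI : NeZero (m : K) := ⟨by rw [Ne, CharP.cast_eq_zero_iff K 2]; exact hm2⟩
  have hdegm : (cyclotomic m K).degree ≠ 0 := by
    rw [degree_cyclotomic]
    exact_mod_cast (Nat.totient_pos.mpr (Nat.pos_of_ne_zero hm0)).ne'
  obtain ⟨ζ, hζroot⟩ := IsAlgClosed.exists_root _ hdegm
  have hζ : IsPrimitiveRoot ζ m := isRoot_cyclotomic_iff.mp hζroot
  have hsub : (X - C ζ) ∣ cyclotomic m K := dvd_iff_isRoot.mpr hζroot
  have hmd : cyclotomic m K ∣ cyclotomic d K := by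
    rcases Nat.eq_zero_or_pos k with hk0 | hkpos
    · rw [← hdm, hk0]; simp
    · rw [← hdm, cyclotomic_mul_prime_pow_eq K hm2 hkpos]
      exact dvd_pow_self _
        (Nat.sub_ne_zero_of_lt (Nat.pow_lt_pow_right one_lt_two (by omega)))
  have hζXN : ζ ^ N = 1 := by
    have hroot : IsRoot ((X : K[X]) ^ N - 1) ζ :=
      dvd_iff_isRoot.mp (hsub.trans (hmd.trans hdvdXN))
    simpa [sub_eq_zero] using hroot
  have hmN : m ∣ N := hζ.dvd_of_pow_eq_one N hζXN
  -- the 2-adic valuation bound : k ≤ a + 1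
  have hka : k ≤ a + 1 := by
    rcases Nat.eq_zero_or_pos k with hk0 | hkpos
    · omega
    · obtain ⟨k', hk'⟩ : ∃ k', k = k' + 1 := ⟨k - 1, by omega⟩
      have hXm1 : ((X : K[X]) ^ N₀ - 1) ≠ 0 := by
        intro h
        have := congrArg (Polynomial.eval (0 : K)) h
        have hN₀0 : N₀ ≠ 0 := fun h0 => hN0 (by rw [← hNm, h0, mul_zero])
        simp [zero_pow hN₀0] at this
      have h2 : (cyclotomic m K) ^ (2 ^ k') = cyclotomic d K := by
        rw [← hdm, hk', cyclotomic_mul_prime_pow_eq K hm2 (Nat.succ_pos k')]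
        congr 1
        rw [Nat.succ_sub_one, pow_succ]
        omega
      have h3 : ((X : K[X]) ^ N₀ - 1) ^ 2 ^ a = (X : K[X]) ^ N - 1 := by
        haveI : CharP K[X] 2 := Polynomial.instCharP 2
        rw [sub_pow_char_pow, one_pow, ← pow_mul, mul_comm N₀ (2 ^ a), hNm]
      have hpow : ((X - C ζ) ^ 2 ^ k') ∣ ((X : K[X]) ^ N₀ - 1) ^ 2 ^ a := by
        rw [h3]
        exact dvd_trans (by rw [← h2]; exact pow_dvd_pow_of_dvd hsub _) hdvdXN
      have hmlt : 2 ^ k' ≤ rootMultiplicity ζ (((X : K[X]) ^ N₀ - 1) ^ 2 ^ a) :=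
        (le_rootMultiplicity_iff (pow_ne_zero _ hXm1)).mpr hpow
      rw [rootMult_pow hXm1] at hmlt
      have hsep : Separable ((X : K[X]) ^ N₀ - 1) :=
        X_pow_sub_one_separable_iff.mpr (by rw [Ne, CharP.cast_eq_zero_iff K 2]; exact hN₀2)
      have hle1 : rootMultiplicity ζ ((X : K[X]) ^ N₀ - 1) ≤ 1 :=
        rootMultiplicity_le_one_of_separable hsep ζ
      have hkk : 2 ^ k' ≤ 2 ^ a := by
        calc 2 ^ k' ≤ 2 ^ a * rootMultiplicity ζ ((X : K[X]) ^ N₀ - 1) := hmlt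
          _ ≤ 2 ^ a * 1 := Nat.mul_le_mul_left _ hle1
          _ = 2 ^ a := mul_one _
      have := (Nat.pow_le_pow_iff_right (by norm_num : 1 < 2)).mp hkk
      omega
  -- conclude
  have h2k : 2 ^ k ∣ 2 * N := by
    refine dvd_trans (pow_dvd_pow 2 hka) ⟨N₀, ?_⟩
    rw [← hNm]; ring
  have hm2N : m ∣ 2 * N := hmN.mul_left 2
  have hcop : Nat.Coprime (2 ^ k) m :=
    (Nat.coprime_two_left.mpr (Nat.odd_iff.mpr (by omega))).pow_left _
  have := Nat.Coprime.mul_dvd_of_dvd_of_dvd hcop h2k hm2N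
  rwa [hdm] at this
end

section
/- Let N = 2^t·M with M odd and let P(x) ∈ ℤ[x] have degree N − 1, all coefficients odd, and be a product (up to sign) of irreducible cyclotomic polynomials, P(x) = ±∏_{d | 2N} Φ_d(x)^{e(d)}. Then e(2^{t+1}) = 0. -/
open Polynomial Finset

theorem multiplicity_two_pow_succ_eq_zero (N t M : ℕ) (hM : Odd M) (hN : N = 2 ^ t * M)
    (hN2 : 2 ≤ N) (P : Polynomial ℤ) (c : ℤ) (hc : c = 1 ∨ c = -1) (e : ℕ → ℕ)
    (hdeg : P.natDegree = N - 1)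
    (hodd : ∀ n ≤ N - 1, Odd (P.coeff n))
    (hfac : P = C c * ∏ d ∈ (2 * N).divisors, (cyclotomic d ℤ) ^ e d) :
    e (2 ^ (t + 1)) = 0 := by
  set f : (ZMod 2)[X] := P.map (Int.castRingHom (ZMod 2)) with hf
  set g : (ZMod 2)[X] := ∑ i ∈ range M, X ^ i with hg
  -- f is the geometric sum of length N
  have hfs : f = ∑ i ∈ range N, X ^ i := by
    ext n
    rw [hf, coeff_map, finset_sum_coeff]
    simp only [coeff_X_pow, Finset.sum_ite_eq, Finset.mem_range]
    by_cases hn : n < N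
    · simp only [hn, if_true]
      obtain ⟨m, hm⟩ := hodd n (by omega)
      rw [hm, map_add, map_mul, map_one]
      have h2 : (Int.castRingHom (ZMod 2)) 2 = 0 := by decide
      rw [h2, zero_mul, zero_add]
    · simp only [hn, if_false]
      rw [coeff_eq_zero_of_natDegree_lt (by omega)]
      simp
  have hg1 : g.eval 1 = 1 := by
    rw [hg, eval_geom_sum]
    simp only [one_pow, Finset.sum_const, card_range, nsmul_eq_mul, mul_one]
    rw [← ZMod.natCast_mod, Nat.odd_iff.mp hM]
    rfl
  have hgne : g ≠ 0 := fun h => by simp [h] at hg1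
  have hgpne : g ^ 2 ^ t ≠ 0 := pow_ne_zero _ hgne
  have hXne : (X - 1 : (ZMod 2)[X]) ≠ 0 := X_sub_C_ne_zero 1
  -- f * (X - 1) = X ^ N - 1 = (g * (X-1)) ^ 2 ^ t
  have key : f * (X - 1) = g ^ 2 ^ t * (X - 1) ^ 2 ^ t := by
    rw [hfs, hg, geom_sum_mul, ← mul_pow, geom_sum_mul]
    rw [sub_pow_char_pow, one_pow, ← pow_mul, hN, Nat.mul_comm]
  have hfne : f ≠ 0 := by
    intro h
    rw [h, zero_mul] at key
    exact (mul_ne_zero hgpne (pow_ne_zero _ hXne)) key.symm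
  -- compute root multiplicity of f at 1
  have hmul : rootMultiplicity 1 f = 2 ^ t - 1 := by
    have h1 : rootMultiplicity 1 (f * (X - 1)) = rootMultiplicity 1 f + 1 := by
      have := rootMultiplicity_mul_X_sub_C_pow (a := (1 : ZMod 2)) (n := 1) hfne
      simpa using this
    have h2 : rootMultiplicity 1 (g ^ 2 ^ t * (X - 1) ^ 2 ^ t) = 2 ^ t := by
      have h := rootMultiplicity_mul_X_sub_C_pow (a := (1 : ZMod 2)) (n := 2 ^ t) hgpne
      rw [map_one] at h
      rw [h, rootMultiplicity_eq_zero, zero_add]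
      intro h
      rw [IsRoot, eval_pow, hg1, one_pow] at h
      exact one_ne_zero h
    have h3 : rootMultiplicity 1 f + 1 = 2 ^ t := by rw [← h1, key, h2]
    omega
  -- cyclotomic (2 ^ (t+1)) over ZMod 2 is (X - 1) ^ 2 ^ t
  have hcyc : cyclotomic (2 ^ (t + 1)) (ZMod 2) = (X - 1 : (ZMod 2)[X]) ^ 2 ^ t := by
    rw [cyclotomic_prime_pow_eq_geom_sum Nat.prime_two]
    rw [sub_pow_char_pow, one_pow, CharTwo.sub_eq_add]
    rw [Finset.sum_range_succ, Finset.sum_range_one]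
    ring
  -- divisibility
  by_contra he
  have he1 : 1 ≤ e (2 ^ (t + 1)) := Nat.one_le_iff_ne_zero.mpr he
  have hmem : 2 ^ (t + 1) ∈ (2 * N).divisors := by
    rw [Nat.mem_divisors]
    exact ⟨⟨M, by rw [hN]; ring⟩, by omega⟩
  have hdvd : cyclotomic (2 ^ (t + 1)) ℤ ^ e (2 ^ (t + 1)) ∣
      ∏ d ∈ (2 * N).divisors, cyclotomic d ℤ ^ e d :=
    Finset.dvd_prod_of_mem _ hmem
  have hdvd2 : (X - 1 : (ZMod 2)[X]) ^ (2 ^ t * e (2 ^ (t + 1))) ∣ f := by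
    rw [pow_mul, ← hcyc]
    have hmap := Polynomial.map_dvd (Int.castRingHom (ZMod 2)) hdvd
    rw [Polynomial.map_pow, map_cyclotomic] at hmap
    refine hmap.trans ?_
    rw [hf, hfac, Polynomial.map_mul, map_C]
    have hc2 : (Int.castRingHom (ZMod 2)) c = 1 := by
      rcases hc with h | h <;> subst h <;> decide
    rw [hc2, map_one, one_mul, Polynomial.map_prod]
  have hle : 2 ^ t * e (2 ^ (t + 1)) ≤ rootMultiplicity 1 f := by
    rw [le_rootMultiplicity_iff hfne, map_one]
    exact hdvd2
  have hpos : 0 < 2 ^ t := Nat.pow_pos (by norm_num)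
  have h4 : 2 ^ t ≤ 2 ^ t * e (2 ^ (t + 1)) := Nat.le_mul_of_pos_right _ he1
  rw [hmul] at hle
  omega
end
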